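/- arXiv:2402.07636 — 2 statements merged into one kernel-verified Lean document; each statement's English description precedes it below -/
import Mathlib

section
/- Let h > 0, let f : ℝ → ℝ be continuous, and let d : C¹([-h,0],ℝ) → (-h, 0) be continuous. Then there exists φ ∈ C¹([-h,0],ℝ) with φ'(0) = f(φ(d(φ))); i.e., the solution manifold X_F of F(φ) = f(φ(d(φ))) is nonempty. -/
open Set

/-- The Banach space `C¹([-h,0],ℝ)`, modelled as the closed subspace of
`C([-h,0],ℝ) × C([-h,0],ℝ)` consisting of pairs `(φ, φ')` where the second component is the
derivative of the first within `[-h,0]`. -/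
noncomputable def D1 (h : ℝ) (hh : 0 < h) :
    Submodule ℝ (C(Icc (-h) 0, ℝ) × C(Icc (-h) 0, ℝ)) where
  carrier := {p | ∀ t : Icc (-h) 0,
      HasDerivWithinAt (fun s : ℝ => p.1 (projIcc (-h) 0 (by linarith) s))
        (p.2 t) (Icc (-h) 0) (t : ℝ)}
  add_mem' := by
    intro p q hp hq t
    first
    | exact (hp t).add (hq t)
    | simpa using (hp t).add (hq t)
  zero_mem' := by
    intro t
    simpa using hasDerivWithinAt_const (t : ℝ) (Icc (-h) 0) (0 : ℝ)
  smul_mem' := by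
    intro c p hp t
    first
    | exact (hp t).const_smul c
    | simpa using (hp t).const_smul c

noncomputable instance D1.instNormedAddCommGroup (h : ℝ) (hh : 0 < h) :
    NormedAddCommGroup (D1 h hh) := by infer_instance

noncomputable instance D1.instNormedSpace (h : ℝ) (hh : 0 < h) :
    NormedSpace ℝ (D1 h hh) := by infer_instance

set_option maxHeartbeats 1000000 in
/-- If `f : ℝ → ℝ` is continuous and `d : C¹([-h,0],ℝ) → (-h,0)` is continuous, then there is
`φ ∈ C¹` with `φ'(0) = f(φ(d(φ)))`; i.e. the solution manifold of `F(φ) = f(φ(d(φ)))` is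
nonempty. -/
theorem stmt2 (h : ℝ) (hh : 0 < h) (f : ℝ → ℝ) (hf : Continuous f)
    (d : D1 h hh → ℝ) (hd : Continuous d) (hdr : ∀ φ, d φ ∈ Ioo (-h) 0) :
    ∃ φ : D1 h hh,
      (φ : C(Icc (-h) 0, ℝ) × C(Icc (-h) 0, ℝ)).2 (projIcc (-h) 0 (by linarith) 0)
        = f ((φ : C(Icc (-h) 0, ℝ) × C(Icc (-h) 0, ℝ)).1 (projIcc (-h) 0 (by linarith) (d φ))) := by
  set b := f 0 with hb
  have hh' : (-h : ℝ) ≤ 0 := by linarith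
  -- the constant-1 element of D1
  have he : (ContinuousMap.const (Icc (-h) 0) (1 : ℝ), (0 : C(Icc (-h) 0, ℝ))) ∈ D1 h hh := by
    intro t
    simpa using hasDerivWithinAt_const (t : ℝ) (Icc (-h) 0) (1 : ℝ)
  set e : D1 h hh := ⟨_, he⟩ with hedef
  -- the element t ↦ b * t with derivative b
  have hbasemem : ((⟨fun t => b * (t : ℝ), by fun_prop⟩ : C(Icc (-h) 0, ℝ)),
      ContinuousMap.const (Icc (-h) 0) b) ∈ D1 h hh := by
    intro t
    have h1 : HasDerivWithinAt (fun s : ℝ => b * s) b (Icc (-h) 0) (t : ℝ) := by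
      simpa using (hasDerivWithinAt_id (t : ℝ) (Icc (-h) 0)).const_mul b
    refine h1.congr (fun y hy => ?_) ?_
    · rw [projIcc_of_mem hh' hy]; rfl
    · rw [projIcc_of_mem hh' t.2]; rfl
  set base : D1 h hh := ⟨_, hbasemem⟩ with hbasedef
  set Φ : ℝ → D1 h hh := fun a => base + a • e with hΦdef
  have hΦ : Continuous Φ := by
    exact continuous_const.add (continuous_id.smul continuous_const)
  set g : ℝ → ℝ := fun a => a + b * d (Φ a) with hgdef
  have hg : Continuous g := continuous_id.add (continuous_const.mul (hd.comp hΦ))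
  set M : ℝ := |b| * h + 1 with hM
  have hbd : ∀ a, |b * d (Φ a)| ≤ |b| * h := by
    intro a
    rw [abs_mul]
    refine mul_le_mul_of_nonneg_left ?_ (abs_nonneg b)
    have := hdr (Φ a)
    rw [abs_le]
    constructor <;> [linarith [this.1]; linarith [this.2, hh]]
  have hgM : 0 ≤ g M := by
    have := abs_le.1 (hbd M); simp only [hgdef, hM]; linarith [this.1]
  have hgmM : g (-M) ≤ 0 := by
    have := abs_le.1 (hbd (-M)); simp only [hgdef, hM]; linarith [this.2]
  have hMM : (-M : ℝ) ≤ M := by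
    have : (0:ℝ) ≤ |b| * h := mul_nonneg (abs_nonneg b) hh.le
    simp only [hM]; linarith
  obtain ⟨a, _, ha⟩ := intermediate_value_Icc hMM (hg.continuousOn) ⟨hgmM, hgM⟩
  refine ⟨Φ a, ?_⟩
  have hdmem : d (Φ a) ∈ Icc (-h) 0 := Ioo_subset_Icc_self (hdr (Φ a))
  have hproj : (projIcc (-h) 0 hh' (d (Φ a)) : ℝ) = d (Φ a) := by
    rw [projIcc_of_mem hh' hdmem]
  have hgen : ∀ q : Icc (-h) 0, ((Φ a : C(Icc (-h) 0, ℝ) × C(Icc (-h) 0, ℝ)).1 q)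
      = b * (q : ℝ) + a := by
    intro q
    simp [hΦdef, hbasedef, hedef]
  have hval : ((Φ a : C(Icc (-h) 0, ℝ) × C(Icc (-h) 0, ℝ)).1
      (projIcc (-h) 0 hh' (d (Φ a)))) = 0 := by
    rw [hgen, hproj]
    have := ha
    simp only [hgdef] at this
    linarith
  have hder : ((Φ a : C(Icc (-h) 0, ℝ) × C(Icc (-h) 0, ℝ)).2
      (projIcc (-h) 0 hh' 0)) = b := by
    simp [hΦdef, hbasedef, hedef]
  rw [hder, hval, hb]
end

section
/- Let h > 0, b > 0, s ∈ (-h, 0). Let f : ℝ → ℝ be injective and let v : ℝ → ℝ, δ : ℝ → (-h,0) be continuously differentiable with lim_{y→∞} v(y) = ∞ and lim_{w→∞} δ(w) = 0. Define d(φ) = δ(∫_{-h}^0 v(φ(t)) dt) and F(φ) = f(φ(d(φ))) on C¹([-h,0],ℝ). Then there exist φ, ψ in U_b = {φ ∈ C¹ : |φ'(t)| < b on [-h, d(φ)]} with φ(t) = ψ(t) for all t ∈ [-h, s] but F(φ) ≠ F(ψ). -/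
/-- Let `b > 0`, `s ∈ (-h,0)`, `f` injective, and `v, δ` continuously differentiable with
`v(y) → ∞` as `y → ∞` and `δ(w) → 0` as `w → ∞`, `δ` taking values in `(-h,0)`. With
`d(φ) = δ(∫_{-h}^0 v(φ(t)) dt)` and `F(φ) = f(φ(d(φ)))`, there exist `φ, ψ` in
`U_b = {φ ∈ C¹ : |φ'(t)| < b on [-h, d(φ)]}` with `φ = ψ` on `[-h,s]` but `F(φ) ≠ F(ψ)`. -/
theorem stmt15 (h b s : ℝ) (hh : 0 < h) (hb : 0 < b) (hs : s ∈ Set.Ioo (-h) 0)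
    (f v δ : ℝ → ℝ) (hf : Function.Injective f)
    (hv : ContDiff ℝ 1 v) (hδ : ContDiff ℝ 1 δ) (hδr : ∀ w, δ w ∈ Set.Ioo (-h) 0)
    (hvlim : Filter.Tendsto v Filter.atTop Filter.atTop)
    (hδlim : Filter.Tendsto δ Filter.atTop (nhds 0))
    (d : (ℝ → ℝ) → ℝ) (hd : ∀ φ, d φ = δ (∫ t in (-h)..0, v (φ t)))
    (F : (ℝ → ℝ) → ℝ) (hF : ∀ φ, F φ = f (φ (d φ)))
    (U : Set (ℝ → ℝ))
    (hU : U = {φ | ContDiff ℝ 1 φ ∧ ∀ t ∈ Set.Icc (-h) (d φ), |deriv φ t| < b}) :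
    ∃ φ ψ, φ ∈ U ∧ ψ ∈ U ∧ (∀ t ∈ Set.Icc (-h) s, φ t = ψ t) ∧ F φ ≠ F ψ := by
  obtain ⟨hs1, hs2⟩ := hs
  have hglue : ContDiff ℝ (1 : ℕ∞) expNegInvGlue := expNegInvGlue.contDiff
  have hcd : Continuous (deriv expNegInvGlue) := hglue.continuous_deriv le_rfl
  -- bound K for |deriv expNegInvGlue (t - s)| on [-h, 0]
  obtain ⟨t₀, -, hK'⟩ := isCompact_Icc.exists_isMaxOn (α := ℝ)
    ⟨-h, le_refl _, by linarith⟩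
    ((hcd.comp (continuous_id.sub continuous_const)).abs.continuousOn
      (s := Set.Icc (-h) 0))
  have hK : ∀ t ∈ Set.Icc (-h) (0:ℝ), |deriv expNegInvGlue (t - s)| ≤ |deriv expNegInvGlue (t₀ - s)| := hK'
  set K : ℝ := |deriv expNegInvGlue (t₀ - s)| with hKdef
  have hK0 : 0 ≤ K := abs_nonneg _
  set η : ℝ := b / (2 * (K + 1)) with hη
  have hη0 : 0 < η := div_pos hb (by linarith)
  -- choose W so that δ w > s for w ≥ W
  obtain ⟨W, hW⟩ := Filter.eventually_atTop.mp (hδlim.eventually (eventually_gt_nhds hs2))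
  set C : ℝ := |W| / h + 1 with hC
  obtain ⟨c, hc⟩ := Filter.eventually_atTop.mp (hvlim.eventually_ge_atTop C)
  -- the two functions
  set φ : ℝ → ℝ := fun _ => c with hφ
  set ψ : ℝ → ℝ := fun t => c + η * expNegInvGlue (t - s) with hψ
  have hψc : ContDiff ℝ 1 ψ :=
    contDiff_const.add (contDiff_const.mul (hglue.comp (contDiff_id.sub contDiff_const)))
  have hψd : ∀ t, HasDerivAt ψ (η * deriv expNegInvGlue (t - s)) t := by
    intro t
    have h1 : HasDerivAt (fun t => expNegInvGlue (t - s))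
        (deriv expNegInvGlue (t - s) * 1) t :=
      HasDerivAt.comp (h₂ := expNegInvGlue) t ((hglue.differentiable (by simp) (t - s)).hasDerivAt)
        ((hasDerivAt_id t).sub_const s)
    have h3 := (hasDerivAt_const t c).add (h1.const_mul η)
    simp only [mul_one, zero_add] at h3
    exact h3
  have hψge : ∀ t, c ≤ ψ t := fun t => by
    have := mul_nonneg hη0.le (expNegInvGlue.nonneg (t - s))
    simp only [hψ]; linarith
  -- integral lower bound for ψ
  have hint : Continuous fun t => v (ψ t) := hv.continuous.comp hψc.continuous
  have hI : W ≤ ∫ t in (-h)..0, v (ψ t) := by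
    have hmono : (∫ t in (-h)..0, (C : ℝ)) ≤ ∫ t in (-h)..0, v (ψ t) := by
      apply intervalIntegral.integral_mono_on (by linarith)
        intervalIntegrable_const (hint.intervalIntegrable _ _)
      intro t _
      exact hc (ψ t) (hψge t)
    rw [intervalIntegral.integral_const, smul_eq_mul] at hmono
    have : (0 - -h) * C = |W| + h := by rw [hC]; field_simp; ring
    nlinarith [abs_nonneg W, le_abs_self W]
  have hdψ : s < d ψ := by rw [hd]; exact hW _ hI
  have hdψ0 : d ψ < 0 := by rw [hd]; exact (hδr _).2
  have hψval : c < ψ (d ψ) := by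
    have := expNegInvGlue.pos_of_pos (sub_pos.mpr hdψ)
    have := mul_pos hη0 this
    simp only [hψ]; linarith
  refine ⟨φ, ψ, ?_, ?_, ?_, ?_⟩
  · rw [hU]
    exact ⟨contDiff_const, fun t _ => by simp [hφ, deriv_const', hb]⟩
  · rw [hU]
    refine ⟨hψc, fun t ht => ?_⟩
    rw [(hψd t).deriv, abs_mul, abs_of_pos hη0]
    have htK : |deriv expNegInvGlue (t - s)| ≤ K :=
      hK t ⟨ht.1, le_trans ht.2 hdψ0.le⟩
    have h2 : η * (K + 1) = b / 2 := by
      rw [hη]; field_simp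
    nlinarith
  · intro t ht
    have : expNegInvGlue (t - s) = 0 :=
      expNegInvGlue.zero_of_nonpos (by linarith [ht.2])
    simp [hφ, hψ, this]
  · rw [hF, hF]
    intro hEq
    have := hf hEq
    simp only [hφ] at this
    linarith [hψval, this.le, this.ge]
end
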